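/- Let K be a finite field, m ≥ 1, H = H_m(K), and let N be a proper subgroup of [H,H] (such N is automatically normal in H). Set G = H/N. Then: (i) [G,G] = Z(G) = [H,H]/N; (ii) for every g ∈ G with g ∉ [G,G], the subgroup generated by {[g,x] : x ∈ G} equals [G,G]; and (iii) for every noncentral g ∈ G, the centralizer C_G(g) has order |C_G(g)| = [G : [G,G]] = |K|^{2m}. -/

import Mathlib

set_option linter.unusedSectionVars false

/-- The generalized Heisenberg group `H_m(K)`: underlying set `K^m × K^m × K` with
multiplication `(u,v,s)·(u',v',s') = (u+u', v+v', s+s'+u·v')`. -/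
structure Heisenberg (K : Type*) (m : ℕ) where
  x : Fin m → K
  y : Fin m → K
  z : K

namespace Heisenberg

variable {K : Type*} [Field K] {m : ℕ}

@[ext] lemma ext' {a b : Heisenberg K m} (hx : a.x = b.x) (hy : a.y = b.y) (hz : a.z = b.z) :
    a = b := by cases a; cases b; simp_all

instance : Mul (Heisenberg K m) :=
  ⟨fun a b => ⟨a.x + b.x, a.y + b.y, a.z + b.z + dotProduct a.x b.y⟩⟩

instance : One (Heisenberg K m) := ⟨⟨0, 0, 0⟩⟩

instance : Inv (Heisenberg K m) :=
  ⟨fun a => ⟨-a.x, -a.y, -a.z + dotProduct a.x a.y⟩⟩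

@[simp] lemma mul_x (a b : Heisenberg K m) : (a * b).x = a.x + b.x := rfl
@[simp] lemma mul_y (a b : Heisenberg K m) : (a * b).y = a.y + b.y := rfl
@[simp] lemma mul_z (a b : Heisenberg K m) :
    (a * b).z = a.z + b.z + dotProduct a.x b.y := rfl
@[simp] lemma one_x : (1 : Heisenberg K m).x = 0 := rfl
@[simp] lemma one_y : (1 : Heisenberg K m).y = 0 := rfl
@[simp] lemma one_z : (1 : Heisenberg K m).z = 0 := rfl
@[simp] lemma inv_x (a : Heisenberg K m) : a⁻¹.x = -a.x := rfl
@[simp] lemma inv_y (a : Heisenberg K m) : a⁻¹.y = -a.y := rfl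
@[simp] lemma inv_z (a : Heisenberg K m) : a⁻¹.z = -a.z + dotProduct a.x a.y := rfl

instance instGroup : Group (Heisenberg K m) where
  mul_assoc a b c := by
    ext <;> simp [add_dotProduct, dotProduct_add] <;> ring
  one_mul a := by ext <;> simp
  mul_one a := by ext <;> simp
  inv_mul_cancel a := by
    ext <;> simp [neg_dotProduct]

end Heisenberg

open scoped commutatorElement

namespace Heisenberg

variable {K : Type*} [Field K] {m : ℕ}

lemma comm_eq (a b : Heisenberg K m) :
    ⁅a, b⁆ = ⟨0, 0, dotProduct a.x b.y - dotProduct b.x a.y⟩ := by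
  show a * b * a⁻¹ * b⁻¹ = _
  ext <;> simp [add_dotProduct, dotProduct_add, neg_dotProduct,
    dotProduct_neg] <;> ring

/-- The subgroup `{(0,0,s)}`. -/
def Zc (K : Type*) [Field K] (m : ℕ) : Subgroup (Heisenberg K m) where
  carrier := {h | h.x = 0 ∧ h.y = 0}
  one_mem' := ⟨rfl, rfl⟩
  mul_mem' := by rintro a b ⟨ha1, ha2⟩ ⟨hb1, hb2⟩; constructor <;> simp_all
  inv_mem' := by rintro a ⟨h1, h2⟩; constructor <;> simp_all

lemma mem_Zc {h : Heisenberg K m} : h ∈ Zc K m ↔ h.x = 0 ∧ h.y = 0 := Iff.rfl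

lemma keyA (h : Heisenberg K m) (hh : h.x ≠ 0 ∨ h.y ≠ 0) (t : K) :
    ∃ x : Heisenberg K m, ⁅h, x⁆ = ⟨0, 0, t⟩ := by
  rcases hh with hx | hy
  · obtain ⟨i, hi⟩ := Function.ne_iff.mp hx
    refine ⟨⟨0, Pi.single i ((h.x i)⁻¹ * t), 0⟩, ?_⟩
    rw [comm_eq]
    ext <;> simp [dotProduct_single]
    simp only [Pi.zero_apply] at hi
    field_simp
  · obtain ⟨i, hi⟩ := Function.ne_iff.mp hy
    refine ⟨⟨Pi.single i (-(h.y i)⁻¹ * t), 0, 0⟩, ?_⟩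
    rw [comm_eq]
    ext <;> simp [single_dotProduct]
    simp only [Pi.zero_apply] at hi
    field_simp

lemma central_comm {c : Heisenberg K m} (hc1 : c.x = 0) (hc2 : c.y = 0)
    (a : Heisenberg K m) : a * c = c * a := by
  ext <;> simp [hc1, hc2, add_comm]

lemma commutator_eq (hm : 1 ≤ m) : commutator (Heisenberg K m) = Zc K m := by
  apply le_antisymm
  · rw [commutator_def, Subgroup.commutator_le]
    intro a _ b _
    rw [comm_eq]
    exact ⟨rfl, rfl⟩
  · intro h hh
    obtain ⟨hx, hy⟩ := mem_Zc.mp hh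
    have hne : (⟨Pi.single (⟨0, hm⟩ : Fin m) (1:K), 0, 0⟩ : Heisenberg K m).x ≠ 0 ∨
        (⟨Pi.single (⟨0, hm⟩ : Fin m) (1:K), 0, 0⟩ : Heisenberg K m).y ≠ 0 := by
      left
      intro hc
      have := congrFun hc ⟨0, hm⟩
      simp at this
    obtain ⟨x, hx'⟩ := keyA _ hne h.z
    have : h = ⟨0, 0, h.z⟩ := by ext <;> simp [hx, hy]
    rw [this, ← hx']
    exact Subgroup.commutator_mem_commutator (Subgroup.mem_top _) (Subgroup.mem_top _)


def equivProd (K : Type*) [Field K] (m : ℕ) :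
    Heisenberg K m ≃ (Fin m → K) × (Fin m → K) × K where
  toFun h := (h.x, h.y, h.z)
  invFun p := ⟨p.1, p.2.1, p.2.2⟩
  left_inv h := rfl
  right_inv p := rfl

instance [Finite K] : Finite (Heisenberg K m) :=
  Finite.of_equiv _ (equivProd K m).symm

def zcEquiv (K : Type*) [Field K] (m : ℕ) : Zc K m ≃ K where
  toFun h := h.1.z
  invFun t := ⟨⟨0, 0, t⟩, ⟨rfl, rfl⟩⟩
  left_inv := by rintro ⟨h, h1, h2⟩; ext <;> simp_all
  right_inv t := rfl

lemma card_heis [Fintype K] :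
    Nat.card (Heisenberg K m) = Fintype.card K ^ (2 * m) * Fintype.card K := by
  rw [Nat.card_congr (equivProd K m), Nat.card_prod, Nat.card_prod, Nat.card_fun,
    Nat.card_eq_fintype_card (α := K), Nat.card_eq_fintype_card (α := Fin m)]
  simp [Fintype.card_fin, two_mul, pow_add]; ring

lemma card_Zc [Fintype K] : Nat.card (Zc K m) = Fintype.card K :=
  (Nat.card_congr (zcEquiv K m)).trans (Nat.card_eq_fintype_card)

lemma index_Zc [Fintype K] : (Zc K m).index = Fintype.card K ^ (2 * m) := by
  have h1 := Subgroup.card_mul_index (Zc K m)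
  rw [card_Zc, card_heis] at h1
  have hq : 0 < Fintype.card K := Fintype.card_pos
  nlinarith [h1]


end Heisenberg

/-- Let `K` be a finite field, `m ≥ 1`, `H = H_m(K)`, and let `N` be a proper
subgroup of `[H,H]` (automatically normal).  Set `G = H/N`.  Then `[G,G] = Z(G) = [H,H]/N`;
for every `g ∈ G \ [G,G]` the subgroup generated by the commutators `[g,x]` is `[G,G]`; and
every noncentral `g ∈ G` has centralizer of order `[G : [G,G]] = |K|^{2m}`. -/
theorem heisenberg_quotient_camina
    (K : Type) [Field K] [Fintype K] (m : ℕ) (hm : 1 ≤ m)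
    (N : Subgroup (Heisenberg K m)) (hN : N < commutator (Heisenberg K m))
    [N.Normal] :
    commutator (Heisenberg K m ⧸ N) = Subgroup.center (Heisenberg K m ⧸ N) ∧
    commutator (Heisenberg K m ⧸ N) =
      Subgroup.map (QuotientGroup.mk' N) (commutator (Heisenberg K m)) ∧
    (∀ g : Heisenberg K m ⧸ N, g ∉ commutator (Heisenberg K m ⧸ N) →
      Subgroup.closure {c : Heisenberg K m ⧸ N | ∃ x : Heisenberg K m ⧸ N, c = ⁅g, x⁆} =
        commutator (Heisenberg K m ⧸ N)) ∧
    (∀ g : Heisenberg K m ⧸ N, g ∉ Subgroup.center (Heisenberg K m ⧸ N) →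
      Nat.card (Subgroup.centralizer {g} : Subgroup (Heisenberg K m ⧸ N)) =
          (commutator (Heisenberg K m ⧸ N)).index ∧
        (commutator (Heisenberg K m ⧸ N)).index = Fintype.card K ^ (2 * m)) := by
  set H := Heisenberg K m
  set G := H ⧸ N
  set mk : H →* G := QuotientGroup.mk' N
  have hsurj : Function.Surjective mk := QuotientGroup.mk'_surjective N
  have hcommH : commutator H = Heisenberg.Zc K m := Heisenberg.commutator_eq hm
  have hNZc : N ≤ Heisenberg.Zc K m := hN.le.trans hcommH.le
  -- if (h.x, h.y) ≠ 0, some commutator with h escapes N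
  have keyN : ∀ h : H, (h.x ≠ 0 ∨ h.y ≠ 0) → ∃ x : H, ⁅h, x⁆ ∉ N := by
    intro h hh
    by_contra hc
    push_neg at hc
    apply hN.not_ge
    rw [hcommH]
    intro c hcZ
    have : c = ⟨0, 0, c.z⟩ := by ext <;> simp [hcZ.1, hcZ.2]
    obtain ⟨x, hx⟩ := Heisenberg.keyA h hh c.z
    rw [this, ← hx]
    exact hc x
  -- commutator of the quotient is the image
  have hmap : commutator G = Subgroup.map mk (commutator H) := by
    rw [commutator_def, commutator_def, Subgroup.map_commutator,
      Subgroup.map_top_of_surjective _ hsurj]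
  -- membership criterion
  have hmem : ∀ h : H, mk h ∈ commutator G ↔ (h.x = 0 ∧ h.y = 0) := by
    intro h
    rw [hmap]
    constructor
    · rintro ⟨c, hc, hch⟩
      rw [hcommH] at hc
      have : h ∈ Heisenberg.Zc K m := by
        have h2 : c⁻¹ * h ∈ N := by
          rw [← QuotientGroup.eq_one_iff (N := N)]
          have : mk (c⁻¹ * h) = (mk c)⁻¹ * mk h := by simp
          show QuotientGroup.mk (c⁻¹ * h) = 1
          calc (QuotientGroup.mk (c⁻¹ * h) : G) = mk (c⁻¹ * h) := rfl
          _ = (mk c)⁻¹ * mk h := by simp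
          _ = 1 := by rw [hch]; simp
        have := hNZc h2
        have h3 : h = c * (c⁻¹ * h) := by rw [mul_inv_cancel_left]
        rw [h3]
        exact (Heisenberg.Zc K m).mul_mem hc this
      exact this
    · intro hh
      exact ⟨h, by rw [hcommH]; exact hh, rfl⟩
  -- center = commutator
  have hcent : Subgroup.center G = commutator G := by
    apply le_antisymm
    · intro g hg
      obtain ⟨h, rfl⟩ := hsurj g
      rw [hmem h]
      by_contra hc
      have hh : h.x ≠ 0 ∨ h.y ≠ 0 := by tauto
      obtain ⟨x, hx⟩ := keyN h hh
      apply hx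
      rw [← QuotientGroup.eq_one_iff (N := N)]
      have h1 : (QuotientGroup.mk ⁅h, x⁆ : G) = ⁅mk h, mk x⁆ :=
        map_commutatorElement mk h x
      rw [h1, commutatorElement_eq_one_iff_commute]
      exact (Subgroup.mem_center_iff.mp hg (mk x)).symm
    · intro g hg
      rw [hmap] at hg
      obtain ⟨c, hc, rfl⟩ := hg
      rw [hcommH] at hc
      rw [Subgroup.mem_center_iff]
      intro a
      induction a using QuotientGroup.induction_on with
      | H a =>
        show QuotientGroup.mk a * mk c = mk c * QuotientGroup.mk a
        have : (QuotientGroup.mk a : G) = mk a := rfl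
        rw [this, ← map_mul, ← map_mul]
        exact congrArg mk (Heisenberg.central_comm hc.1 hc.2 a)
  -- every element of commutator G is ⁅mk h, x⁆ for suitable x, and also ⁅x, mk h⁆
  have hsurjcomm : ∀ h : H, (h.x ≠ 0 ∨ h.y ≠ 0) → ∀ c ∈ commutator G,
      ∃ x : H, ⁅mk h, mk x⁆ = c := by
    intro h hh c hc
    rw [hmap] at hc
    obtain ⟨c', hc', rfl⟩ := hc
    rw [hcommH] at hc'
    obtain ⟨x, hx⟩ := Heisenberg.keyA h hh c'.z
    refine ⟨x, ?_⟩
    rw [← map_commutatorElement, hx]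
    congr 1
    ext <;> simp [hc'.1, hc'.2]
  refine ⟨hcent.symm, hmap, ?_, ?_⟩
  · -- part (ii)
    intro g hg
    obtain ⟨h, rfl⟩ := hsurj g
    have hh : h.x ≠ 0 ∨ h.y ≠ 0 := by
      rw [hmem h] at hg; tauto
    apply le_antisymm
    · rw [Subgroup.closure_le]
      rintro c ⟨x, rfl⟩
      exact Subgroup.commutator_mem_commutator (Subgroup.mem_top _) (Subgroup.mem_top _)
    · intro c hc
      obtain ⟨x, hx⟩ := hsurjcomm h hh c hc
      exact Subgroup.subset_closure ⟨mk x, hx.symm⟩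
  · -- part (iii)
    intro g hg
    rw [hcent] at hg
    obtain ⟨h, rfl⟩ := hsurj g
    have hh : h.x ≠ 0 ∨ h.y ≠ 0 := by
      rw [hmem h] at hg; tauto
    -- index of commutator G
    have hidx : (commutator G).index = Fintype.card K ^ (2 * m) := by
      rw [hmap, Subgroup.index_map, QuotientGroup.ker_mk',
        MonoidHom.range_eq_top_of_surjective _ hsurj, Subgroup.index_top, mul_one,
        sup_of_le_left hN.le, hcommH, Heisenberg.index_Zc]
    -- orbit of g under conjugation is a coset of commutator G
    have horb : MulAction.orbit (ConjAct G) (mk h) =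
        (fun c => c * mk h) '' (commutator G : Set G) := by
      ext w
      constructor
      · rintro ⟨x, rfl⟩
        refine ⟨⁅ConjAct.ofConjAct x, mk h⁆, Subgroup.commutator_mem_commutator
          (Subgroup.mem_top _) (Subgroup.mem_top _), ?_⟩
        show ⁅ConjAct.ofConjAct x, mk h⁆ * mk h = x • mk h
        rw [ConjAct.smul_def]
        group
      · rintro ⟨c, hc, rfl⟩
        have hcinv : c⁻¹ ∈ commutator G := (commutator G).inv_mem hc
        obtain ⟨x, hx⟩ := hsurjcomm h hh c⁻¹ hcinv
        have hceq : c = ⁅mk x, mk h⁆ := by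
          rw [← commutatorElement_inv, hx, inv_inv]
        refine ⟨ConjAct.toConjAct (mk x), ?_⟩
        show ConjAct.toConjAct (mk x) • mk h = c * mk h
        rw [ConjAct.smul_def, ConjAct.ofConjAct_toConjAct, hceq]
        group
    -- index of the centralizer equals card of commutator G
    have hidxc : (Subgroup.centralizer {mk h} : Subgroup G).index = Nat.card (commutator G) := by
      rw [Subgroup.centralizer_eq_comap_stabilizer]
      erw [Subgroup.index_comap_of_surjective _ (MulEquiv.surjective _)]
      rw [MulAction.index_stabilizer, horb,
        Set.ncard_image_of_injective _ (mul_left_injective (mk h)),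
        ← Nat.card_coe_set_eq]
      rfl
    have h1 := Subgroup.card_mul_index (Subgroup.centralizer {mk h} : Subgroup G)
    have h2 := Subgroup.card_mul_index (commutator G)
    rw [hidxc] at h1
    have hpos : 0 < Nat.card (commutator G) := Nat.card_pos
    have : Nat.card (Subgroup.centralizer {mk h} : Subgroup G) = (commutator G).index := by
      have := h1.trans h2.symm
      exact Nat.eq_of_mul_eq_mul_right hpos (by linarith [this])
    exact ⟨this, hidx⟩
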